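/- Let d be a pseudometric on a type α, let Σ¹,…,Σ^C (C ≥ 1) be nonempty finite subsets of α with positive weights λ₁,…,λ_C, let W ≥ 0, let k* ∈ {1,…,C} and σ* ∈ Σ^{k*} satisfy max_j λ_j·d_min(σ*, Σ^j) ≤ 2W. For each j choose σ_j ∈ Σ^j with d(σ*, σ_j) = d_min(σ*, Σ^j) and σ_{k*} = σ*. Let c ≥ 0 and suppose π' ∈ α is a c-approximate minimizer of the surrogate objective, i.e., for every π ∈ α, max_j λ_j·d(π', σ_j) ≤ c·max_j λ_j·d(π, σ_j). Then max_j λ_j·d_min(π', Σ^j) ≤ 2cW. -/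
import Mathlib


/-- The min distance between a point `π` and a nonempty finite set `T` of
points: `min_{σ ∈ T} d(π, σ)`. -/
noncomputable def minDist {α : Type*} (d : α → α → ℝ) (π : α) (T : Finset α)
    (hT : T.Nonempty) : ℝ :=
  T.inf' hT (d π)

/-- Applying a `c`-approximation algorithm for the median minmax problem to the
representatives `σ_j` selected by min-Pick-Perm yields a `2c`-approximation for
the min-distance minmax problem. -/
theorem min_pick_then_approx {α : Type*} (d : α → α → ℝ)
    (hd_self : ∀ x, d x x = 0)
    (hd_symm : ∀ x y, d x y = d y x)
    (hd_nonneg : ∀ x y, 0 ≤ d x y)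
    (hd_tri : ∀ x y z, d x z ≤ d x y + d y z)
    {C : ℕ} (hC : 0 < C)
    (S : Fin C → Finset α) (hS : ∀ k, (S k).Nonempty)
    (lam : Fin C → ℝ) (hlam : ∀ k, 0 < lam k)
    (W : ℝ) (hW : 0 ≤ W)
    (kstar : Fin C) (σstar : α) (hσstar_mem : σstar ∈ S kstar)
    (hσstar : Finset.univ.sup' ⟨⟨0, hC⟩, Finset.mem_univ _⟩
      (fun j => lam j * minDist d σstar (S j) (hS j)) ≤ 2 * W)
    (σ : Fin C → α) (hσ_mem : ∀ j, σ j ∈ S j)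
    (hσ_min : ∀ j, d σstar (σ j) = minDist d σstar (S j) (hS j))
    (hσ_kstar : σ kstar = σstar)
    (c : ℝ) (hc : 0 ≤ c) (π' : α)
    (happrox : ∀ π : α,
      Finset.univ.sup' ⟨⟨0, hC⟩, Finset.mem_univ _⟩
        (fun j => lam j * d π' (σ j)) ≤
      c * Finset.univ.sup' ⟨⟨0, hC⟩, Finset.mem_univ _⟩
        (fun j => lam j * d π (σ j))) :
    Finset.univ.sup' ⟨⟨0, hC⟩, Finset.mem_univ _⟩
      (fun j => lam j * minDist d π' (S j) (hS j)) ≤ 2 * c * W := by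
  have h1 : Finset.univ.sup' ⟨⟨0, hC⟩, Finset.mem_univ _⟩
      (fun j => lam j * minDist d π' (S j) (hS j)) ≤
      Finset.univ.sup' ⟨⟨0, hC⟩, Finset.mem_univ _⟩ (fun j => lam j * d π' (σ j)) := by
    apply Finset.sup'_le
    intro j _
    refine le_trans ?_ (Finset.le_sup' _ (Finset.mem_univ j))
    exact mul_le_mul_of_nonneg_left (Finset.inf'_le _ (hσ_mem j)) (hlam j).le
  have h2 := happrox σstar
  have h3 : Finset.univ.sup' ⟨⟨0, hC⟩, Finset.mem_univ _⟩
      (fun j => lam j * d σstar (σ j)) ≤ 2 * W := by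
    refine le_trans (le_of_eq ?_) hσstar
    congr 1
    ext j
    rw [hσ_min j]
  refine le_trans h1 (le_trans h2 ?_)
  have h4 := mul_le_mul_of_nonneg_left h3 hc
  linarith
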